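/- Let G ∈ 𝓔_c, L a subgroup of G, and x, y ∈ G \ L elements such that (1) the order of x is an odd prime or equal to 4, and (2) the orders of the cosets Lx and Ly, considered as elements of the quotient group G/L, are equal. Then there exists y' ∈ Ly whose order equals the order of x. -/

import Mathlib

open scoped Pointwise

noncomputable section

namespace Paper

/-- The element `∑_{x ∈ X} x` of the integer group ring `ℤG`. -/
def sumElems {G : Type*} [Group G] [Finite G] (X : Set G) : MonoidAlgebra ℤ G :=
  ∑ x ∈ X.toFinite.toFinset, MonoidAlgebra.single x (1 : ℤ)

/-- A Schur ring (S-ring) over a finite group `G`, described by the partition of `G`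
into its basic sets: the partition contains `{1}`, is closed under taking inverses,
and its `ℤ`-span inside the group ring `ℤG` is closed under multiplication
(hence is a subring of `ℤG`). -/
structure SRing (G : Type*) [Group G] [Finite G] where
  basic : Set (Set G)
  nonempty : ∀ X ∈ basic, X.Nonempty
  cover : ∀ g : G, ∃! X, X ∈ basic ∧ g ∈ X
  one_mem : ({1} : Set G) ∈ basic
  inv_mem : ∀ X ∈ basic, X⁻¹ ∈ basic
  mul_mem : ∀ a b : MonoidAlgebra ℤ G,
    a ∈ Submodule.span ℤ (sumElems '' basic) →
    b ∈ Submodule.span ℤ (sumElems '' basic) →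
    a * b ∈ Submodule.span ℤ (sumElems '' basic)

namespace SRing

/-- The `ℤ`-module underlying an S-ring. -/
def span {G : Type*} [Group G] [Finite G] (A : SRing G) :
    Submodule ℤ (MonoidAlgebra ℤ G) :=
  Submodule.span ℤ (sumElems '' A.basic)

/-- A set `X ⊆ G` is an `𝒜`-set if `∑_{x ∈ X} x ∈ 𝒜`. -/
def IsASet {G : Type*} [Group G] [Finite G] (A : SRing G) (X : Set G) : Prop :=
  sumElems X ∈ A.span

/-- A subgroup which is an `𝒜`-set is an `𝒜`-subgroup. -/
def IsASubgroup {G : Type*} [Group G] [Finite G] (A : SRing G) (H : Subgroup G) : Prop :=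
  A.IsASet (H : Set G)

end SRing

/-- The arc set `R(X) = {(g, xg) : x ∈ X, g ∈ G}` of the Cayley digraph `Cay(G, X)`. -/
def Rel {G : Type*} [Group G] (X : Set G) : Set (G × G) := {p | p.2 * p.1⁻¹ ∈ X}

/-- `f : G ≃ G'` is an isomorphism from the S-ring `A` over `G` to the S-ring `B`
over `G'` if `{R(X)^f : X ∈ 𝒮(A)} = {R(Y) : Y ∈ 𝒮(B)}`. -/
def IsSRingIso {G G' : Type*} [Group G] [Finite G] [Group G'] [Finite G']
    (A : SRing G) (B : SRing G') (f : G ≃ G') : Prop :=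
  (fun X => Prod.map f f '' Rel X) '' A.basic = Rel '' B.basic

/-- The automorphism group `Aut(𝒜)` of an S-ring, as a set of permutations of `G`. -/
def SRing.autSet {G : Type*} [Group G] [Finite G] (A : SRing G) : Set (Equiv.Perm G) :=
  {f | ∀ X ∈ A.basic, Prod.map f f '' Rel X = Rel X}

/-- The set `Iso(𝒜)` of isomorphisms from `𝒜` onto S-rings over the same group `G`. -/
def SRing.isoSet {G : Type*} [Group G] [Finite G] (A : SRing G) : Set (Equiv.Perm G) :=
  {f | ∃ B : SRing G, IsSRingIso A B f}

/-- `Aut(G)` as a set of permutations of `G`. -/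
def autPerm (G : Type*) [Group G] : Set (Equiv.Perm G) :=
  Set.range fun φ : G ≃* G => (φ.toEquiv : Equiv.Perm G)

/-- A CI-S-ring: `Aut(𝒜)·Aut(G) = Iso(𝒜)`. -/
def SRing.IsCI {G : Type*} [Group G] [Finite G] (A : SRing G) : Prop :=
  A.autSet * autPerm G = A.isoSet

/-- The orbits on `G` of a set of automorphisms of `G`. -/
def setOrbits {G : Type*} [Group G] (Δ : Set (MulAut G)) : Set (Set G) :=
  Set.range fun g : G => (fun φ : MulAut G => φ g) '' Δ

/-- An S-ring is cyclotomic if its basic sets are exactly the orbits of some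
subgroup `K ≤ Aut(G)`. -/
def SRing.IsCyclotomic {G : Type*} [Group G] [Finite G] (A : SRing G) : Prop :=
  ∃ K : Subgroup (MulAut G), A.basic = setOrbits (K : Set (MulAut G))

/-- `Aut_G(𝒜) = Aut(𝒜) ∩ Aut(G)`, as a set of automorphisms of `G`. -/
def SRing.autGSet {G : Type*} [Group G] [Finite G] (A : SRing G) : Set (MulAut G) :=
  {φ | (φ.toEquiv : Equiv.Perm G) ∈ A.autSet}

/-- A (cyclotomic) S-ring is Cayley minimal if `Aut_G(𝒜)` is the only subgroup of
`Aut(G)` whose orbits on `G` coincide with those of `Aut_G(𝒜)`. -/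
def SRing.IsCayleyMinimal {G : Type*} [Group G] [Finite G] (A : SRing G) : Prop :=
  ∀ K : Subgroup (MulAut G),
    setOrbits (K : Set (MulAut G)) = setOrbits A.autGSet →
    (K : Set (MulAut G)) = A.autGSet

/-- `rad(X) = {g ∈ G : gX = Xg = X}`. -/
def rad {G : Type*} [Group G] (X : Set G) : Set G := {g | {g} * X = X ∧ X * {g} = X}

/-- The class `𝓔_c` of finite abelian groups all of whose Sylow subgroups are
elementary abelian or isomorphic to `C₄`. -/
def InEc (G : Type*) [CommGroup G] [Finite G] : Prop :=
  ∀ p : ℕ, p.Prime → ∀ P : Sylow p G,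
    (∀ x : ↥(P : Subgroup G), x ^ p = 1) ∨
    Nonempty (↥(P : Subgroup G) ≃* Multiplicative (ZMod 4))

/-- A finite group `G` is a `DCI`-group if any two Cayley digraphs over `G` that are
isomorphic as digraphs are Cayley isomorphic. -/
def IsDCIGroup (G : Type*) [Group G] : Prop :=
  ∀ S T : Set G,
    (∃ f : G ≃ G, ∀ g h : G, h * g⁻¹ ∈ S ↔ f h * (f g)⁻¹ ∈ T) →
    ∃ φ : G ≃* G, ⇑φ '' S = T

/-- The subgroup `G_r ≤ Sym(G)` of right translations of `G`. -/
def rightTranslations (G : Type*) [Group G] : Subgroup (Equiv.Perm G) where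
  carrier := Set.range fun g : G => Equiv.mulRight g
  one_mem' := ⟨1, by ext x; simp⟩
  mul_mem' := by
    rintro _ _ ⟨a, rfl⟩ ⟨b, rfl⟩
    exact ⟨b * a, by ext x; simp [mul_assoc]⟩
  inv_mem' := by
    rintro _ ⟨a, rfl⟩
    exact ⟨a⁻¹, by ext x; simp⟩

/-- The basic sets of the S-ring `V(K, G)`: the orbits of the stabilizer `K_e`
of the identity on `G`. -/
def VBasic {G : Type*} [Group G] (K : Subgroup (Equiv.Perm G)) : Set (Set G) :=
  Set.range fun g : G => MulAction.orbit (MulAction.stabilizer K (1 : G)) g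

/-- A subgroup `R ≤ Sym(G)` is regular if for all `g, h ∈ G` there is a
unique `r ∈ R` with `r(g) = h`. -/
def IsRegularSubgroup {G : Type*} [Group G] (R : Subgroup (Equiv.Perm G)) : Prop :=
  ∀ g h : G, ∃! r : R, (r : Equiv.Perm G) g = h

/-- `K ∈ Sup(G_r)`. -/
def InSup {G : Type*} [Group G] (K : Subgroup (Equiv.Perm G)) : Prop :=
  rightTranslations G ≤ K

/-- `K ∈ Sup₂(G_r)`, i.e. `K ≥ G_r` and `K = K^{(2)} = Aut(V(K,G))`. -/
def InSup2 {G : Type*} [Group G] [Finite G] (K : Subgroup (Equiv.Perm G)) : Prop :=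
  InSup K ∧
    (K : Set (Equiv.Perm G)) =
      {f : Equiv.Perm G | ∀ X ∈ VBasic K, Prod.map (⇑f) (⇑f) '' Rel X = Rel X}

/-- `K₁ ⪯_G K₂`: `K₁ ≤ K₂` and every regular subgroup of `K₂` isomorphic to `G`
is conjugate in `K₂` to a subgroup of `K₁`. -/
def GComplete {G : Type*} [Group G] (K₁ K₂ : Subgroup (Equiv.Perm G)) : Prop :=
  K₁ ≤ K₂ ∧ ∀ R : Subgroup (Equiv.Perm G), R ≤ K₂ → IsRegularSubgroup R →
    Nonempty (↥R ≃* G) → ∃ k ∈ K₂, ∀ r ∈ R, k * r * k⁻¹ ∈ K₁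

/-- `K ∈ Sup₂^min(G_r)`: a minimal element of `Sup₂(G_r)` with respect to `⪯_G`. -/
def InSup2Min {G : Type*} [Group G] [Finite G] (K : Subgroup (Equiv.Perm G)) : Prop :=
  InSup2 K ∧ ∀ K' : Subgroup (Equiv.Perm G), InSup2 K' → GComplete K' K → K' = K

/-- The basic sets of the restriction `𝒜_U` of `𝒜` to an `𝒜`-subgroup `U`:
the basic sets of `𝒜` contained in `U`, viewed inside `U`. -/
def restrictBasic {G : Type*} [Group G] [Finite G] (A : SRing G) (U : Subgroup G) :
    Set (Set ↥U) :=
  {Y : Set ↥U | Subtype.val '' Y ∈ A.basic}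

/-- The basic sets of the quotient S-ring `𝒜_{G/L}`: the images of the basic
sets of `𝒜` under the canonical epimorphism `G → G/L`. -/
def quotBasic {G : Type*} [CommGroup G] [Finite G] (A : SRing G) (L : Subgroup G) :
    Set (Set (G ⧸ L)) :=
  (fun X => QuotientGroup.mk '' X) '' A.basic

/-- The basic sets of the S-ring `𝒜_S` on the section `S = U/L`: the images under
the canonical epimorphism `U → U/L` of the basic sets of `𝒜` contained in `U`. -/
def secBasic {G : Type*} [CommGroup G] [Finite G] (A : SRing G) (U L : Subgroup G) :
    Set (Set (↥U ⧸ L.subgroupOf U)) :=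
  {Z | ∃ X ∈ A.basic, X ⊆ (U : Set G) ∧
    Z = QuotientGroup.mk '' (Subtype.val ⁻¹' X : Set ↥U)}

/-- The set of bijections of `H ⧸ N` induced by members of `Δ ⊆ Sym(H)`
permuting the `N`-cosets. -/
def inducedOnQuot {H : Type*} [CommGroup H] (N : Subgroup H) (Δ : Set (Equiv.Perm H)) :
    Set (Equiv.Perm (H ⧸ N)) :=
  {σ | ∃ f ∈ Δ, ∀ x : H, σ (QuotientGroup.mk x) = QuotientGroup.mk (f x)}

/-- The canonical (injective) homomorphism `U/L → G/L` for `L ≤ U ≤ G`. -/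
def secIncl {G : Type*} [CommGroup G] (U L : Subgroup G) :
    (↥U ⧸ L.subgroupOf U) →* G ⧸ L :=
  QuotientGroup.map (L.subgroupOf U) L U.subtype (fun _ hx => hx)

/-- The set of bijections of the section `S = U/L` induced by members of
`Δ ⊆ Sym(G/L)` preserving `S` (i.e. permuting the `L`-cosets contained in `U`). -/
def inducedOnSec {G : Type*} [CommGroup G] (U L : Subgroup G)
    (Δ : Set (Equiv.Perm (G ⧸ L))) : Set (Equiv.Perm (↥U ⧸ L.subgroupOf U)) :=
  {σ | ∃ φ ∈ Δ, ∀ x : ↥U,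
    φ (QuotientGroup.mk (x : G) : G ⧸ L) = secIncl U L (σ (QuotientGroup.mk x))}

/-- The basic sets of the S-ring `(ℤL ⊗ 𝒜_V) ≀_{(V×L)/V} ℤ(U/V)` over `U`,
where `Lu, V ≤ U` and `𝒜_V` is the restriction of `𝒜_U` to `V`. -/
def tensorWreathBasic {U : Type*} [CommGroup U] [Finite U] (AU : SRing U)
    (Lu V : Subgroup U) : Set (Set U) :=
  {Z | (∃ l ∈ Lu, ∃ X ∈ AU.basic, X ⊆ (V : Set U) ∧ Z = l • X) ∨
       (∃ u : U, u ∉ Lu ⊔ V ∧ Z = u • (V : Set U))}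

/-- Condition (CA): `𝒜_S = ℤS`. -/
def CondCA {G : Type*} [CommGroup G] [Finite G] (A : SRing G) (U L : Subgroup G) : Prop :=
  ∀ AS : SRing (↥U ⧸ L.subgroupOf U), AS.basic = secBasic A U L →
    AS.basic = Set.range fun s => ({s} : Set (↥U ⧸ L.subgroupOf U))

/-- Condition (CA'): `𝒜_U` or `𝒜_{G/L}` is cyclotomic and `𝒜_S` is Cayley minimal. -/
def CondCA' {G : Type*} [CommGroup G] [Finite G] (A : SRing G) (U L : Subgroup G) : Prop :=
  ((∀ AU : SRing ↥U, AU.basic = restrictBasic A U → AU.IsCyclotomic) ∨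
   (∀ AQ : SRing (G ⧸ L), AQ.basic = quotBasic A L → AQ.IsCyclotomic)) ∧
  (∀ AS : SRing (↥U ⧸ L.subgroupOf U), AS.basic = secBasic A U L → AS.IsCayleyMinimal)

/-- Condition (CA''): `U ≅ C_{4p}`, `L ≅ C₂` and
`𝒜_U = (ℤL ⊗ 𝒜_V) ≀_{(V×L)/V} ℤ(U/V)` for an `𝒜_U`-subgroup `V` of order `p`. -/
def CondCA'' {G : Type*} [CommGroup G] [Finite G] (p : ℕ) (A : SRing G)
    (U L : Subgroup G) : Prop :=
  Nat.card ↥U = 4 * p ∧ IsCyclic ↥U ∧ Nat.card ↥L = 2 ∧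
  ∀ AU : SRing ↥U, AU.basic = restrictBasic A U →
    ∃ V : Subgroup ↥U, AU.IsASubgroup V ∧ Nat.card ↥V = p ∧
      AU.basic = tensorWreathBasic AU (L.subgroupOf U) V

/-- `𝒜 = 𝒜_{G₁} ⊗ 𝒜_{G₂}` for `G = G₁ × G₂` (internally). -/
def IsTensorDecomp {G : Type*} [CommGroup G] [Finite G] (A : SRing G)
    (G₁ G₂ : Subgroup G) : Prop :=
  A.IsASubgroup G₁ ∧ A.IsASubgroup G₂ ∧ G₁ ⊓ G₂ = ⊥ ∧ G₁ ⊔ G₂ = ⊤ ∧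
  A.basic = {Z | ∃ X ∈ A.basic, ∃ Y ∈ A.basic,
    X ⊆ (G₁ : Set G) ∧ Y ⊆ (G₂ : Set G) ∧ Z = X * Y}

/-- `𝒜` is the tensor product of two S-rings over proper nontrivial subgroups of `G`. -/
def TensorConclusion {G : Type*} [CommGroup G] [Finite G] (A : SRing G) : Prop :=
  ∃ G₁ G₂ : Subgroup G, G₁ ≠ ⊥ ∧ G₁ ≠ ⊤ ∧ G₂ ≠ ⊥ ∧ G₂ ≠ ⊤ ∧ IsTensorDecomp A G₁ G₂

/-- `𝒜` is a nontrivial `S = U/L`-wreath product satisfying one of the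
conditions (CA), (CA'), (CA''). -/
def WreathConclusion {G : Type*} [CommGroup G] [Finite G] (p : ℕ) (A : SRing G) : Prop :=
  ∃ U L : Subgroup G, L ≤ U ∧ A.IsASubgroup U ∧ A.IsASubgroup L ∧ L ≠ ⊥ ∧ U ≠ ⊤ ∧
    (∀ X ∈ A.basic, ¬ X ⊆ (U : Set G) → (L : Set G) ⊆ rad X) ∧
    (CondCA A U L ∨ CondCA' A U L ∨ CondCA'' p A U L)




/-- A `p`-element lies in some Sylow `p`-subgroup. -/
lemma mem_some_sylow {G : Type*} [Group G] {p : ℕ} [Fact p.Prime] (g : G) {k : ℕ}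
    (hg : orderOf g = p ^ k) : ∃ P : Sylow p G, g ∈ (P : Subgroup G) := by
  have hpg : IsPGroup p (Subgroup.zpowers g) := by
    intro h
    refine ⟨k, ?_⟩
    have h1 : orderOf (h : G) ∣ p ^ k := hg ▸ orderOf_dvd_of_mem_zpowers h.2
    have h2 : (h : G) ^ p ^ k = 1 := orderOf_dvd_iff_pow_eq_one.mp h1
    exact Subtype.ext (by simpa using h2)
  obtain ⟨P, hP⟩ := hpg.exists_le_sylow
  exact ⟨P, hP (Subgroup.mem_zpowers g)⟩

lemma card_c4 {H : Type*} [Group H] (e : H ≃* Multiplicative (ZMod 4)) :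
    Nat.card H = 4 := by
  rw [Nat.card_congr e.toEquiv, Nat.card_congr (Multiplicative.toAdd (α := ZMod 4)),
    Nat.card_zmod]

/-- No element of order `p^2` for odd prime `p`. -/
lemma no_odd_sq {G : Type*} [CommGroup G] [Finite G] (hG : InEc G) {p : ℕ}
    (hp : p.Prime) (hodd : Odd p) (g : G) : orderOf g ≠ p ^ 2 := by
  haveI := Fact.mk hp
  intro hg
  obtain ⟨P, hgP⟩ := mem_some_sylow g hg
  rcases hG p hp P with h | e
  · have h0 := h ⟨g, hgP⟩
    have h1 : g ^ p = 1 := Subtype.ext_iff.mp h0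
    have h2 : orderOf g ∣ p := orderOf_dvd_iff_pow_eq_one.mpr h1
    rw [hg] at h2
    have := Nat.le_of_dvd hp.pos h2
    nlinarith [hp.two_le]
  · obtain ⟨e⟩ := e
    have h1 : orderOf g ∣ Nat.card (P : Subgroup G) :=
      Subgroup.orderOf_dvd_natCard _ hgP
    rw [card_c4 e, hg, show (4:ℕ) = 2 ^ 2 from rfl] at h1
    have hp2 : p ∣ 2 ^ 2 := dvd_trans (dvd_pow_self p (by norm_num)) h1
    have hp2' := (Nat.prime_dvd_prime_iff_eq hp Nat.prime_two).mp (hp.dvd_of_dvd_pow hp2)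
    rw [hp2'] at hodd
    exact (Nat.not_odd_iff_even.mpr even_two) hodd

/-- No element of order 8. -/
lemma no_eight {G : Type*} [CommGroup G] [Finite G] (hG : InEc G) (g : G) :
    orderOf g ≠ 8 := by
  haveI := Fact.mk Nat.prime_two
  intro hg
  have hg' : orderOf g = 2 ^ 3 := by rw [hg]; norm_num
  obtain ⟨P, hgP⟩ := mem_some_sylow g hg'
  rcases hG 2 Nat.prime_two P with h | e
  · have h1 : g ^ 2 = 1 := Subtype.ext_iff.mp (h ⟨g, hgP⟩)
    have h2 : orderOf g ∣ 2 := orderOf_dvd_iff_pow_eq_one.mpr h1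
    rw [hg] at h2
    norm_num at h2
  · obtain ⟨e⟩ := e
    have h1 : orderOf g ∣ Nat.card (P : Subgroup G) :=
      Subgroup.orderOf_dvd_natCard _ hgP
    rw [card_c4 e, hg] at h1
    norm_num at h1

/-- Unique involution: if `x` has order 4 and `z` has order 2 then `z = x ^ 2`. -/
lemma invol_eq {G : Type*} [CommGroup G] [Finite G] (hG : InEc G) {x z : G}
    (hx : orderOf x = 4) (hz : orderOf z = 2) : z = x ^ 2 := by
  haveI := Fact.mk Nat.prime_two
  have hxm : x ∈ CommGroup.primaryComponent G 2 := ⟨2, orderOf_dvd_iff_pow_eq_one.mp (by rw [hx]; norm_num)⟩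
  have hzm : z ∈ CommGroup.primaryComponent G 2 := ⟨1, orderOf_dvd_iff_pow_eq_one.mp (by rw [hz]; norm_num)⟩
  obtain ⟨P, hP⟩ := (CommGroup.primaryComponent.isPGroup (G := G) (p := 2)).exists_le_sylow
  have hxP : x ∈ (P : Subgroup G) := hP hxm
  have hzP : z ∈ (P : Subgroup G) := hP hzm
  rcases hG 2 Nat.prime_two P with h | e
  · have h1 : x ^ 2 = 1 := Subtype.ext_iff.mp (h ⟨x, hxP⟩)
    have h2 : orderOf x ∣ 2 := orderOf_dvd_iff_pow_eq_one.mpr h1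
    rw [hx] at h2
    norm_num at h2
  · obtain ⟨e⟩ := e
    have hoa : orderOf (e ⟨x, hxP⟩) = 4 := by
      rw [e.orderOf_eq, Subgroup.orderOf_mk, hx]
    have hob : orderOf (e ⟨z, hzP⟩) = 2 := by
      rw [e.orderOf_eq, Subgroup.orderOf_mk, hz]
    set a := e ⟨x, hxP⟩
    set b := e ⟨z, hzP⟩
    have hoa2 : orderOf (a ^ 2) = 2 := by
      rw [orderOf_pow, hoa]; norm_num
    have key : ∀ u v : Multiplicative (ZMod 4), u ^ 2 = 1 → u ≠ 1 → v ^ 2 = 1 → v ≠ 1 →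
        u = v := by decide
    have hb_eq : b = a ^ 2 := by
      refine key b (a ^ 2) ?_ ?_ ?_ ?_
      · have h2 := pow_orderOf_eq_one b; rwa [hob] at h2
      · intro h1; rw [h1, orderOf_one] at hob; norm_num at hob
      · have h2 := pow_orderOf_eq_one (a ^ 2); rwa [hoa2] at h2
      · intro h1; rw [h1, orderOf_one] at hoa2; norm_num at hoa2
    have hfin : (⟨z, hzP⟩ : (P : Subgroup G)) = ⟨x, hxP⟩ ^ 2 := by
      apply e.injective
      rw [map_pow]; exact hb_eq
    simpa [Subtype.ext_iff] using hfin

lemma ord_pow_div {G : Type*} [Group G] [Finite G] (y : G) {t : ℕ}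
    (ht : t ∣ orderOf y) : orderOf (y ^ (orderOf y / t)) = t := by
  have hn : orderOf y ≠ 0 := (orderOf_pos y).ne'
  rw [orderOf_pow, Nat.gcd_comm, Nat.gcd_eq_left (Nat.div_dvd_of_dvd ht),
    Nat.div_div_self ht hn]

/-- Let `G ∈ 𝓔_c`, `L ≤ G`, and `x, y ∈ G \ L` such that the order
of `x` is an odd prime or `4`, and the orders of `Lx` and `Ly` in `G/L` coincide.
Then some `y' ∈ Ly` has the same order as `x`. -/
theorem stmt3 (G : Type*) [CommGroup G] [Finite G] (hG : InEc G)
    (L : Subgroup G) (x y : G) (hx : x ∉ L) (hy : y ∉ L)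
    (hord : ((orderOf x).Prime ∧ Odd (orderOf x)) ∨ orderOf x = 4)
    (heq : orderOf (QuotientGroup.mk x : G ⧸ L) = orderOf (QuotientGroup.mk y : G ⧸ L)) :
    ∃ y' ∈ (L : Set G) * {y}, orderOf y' = orderOf x := by
  classical
  set q := orderOf x with hq
  set n := orderOf y with hn
  set d := orderOf (QuotientGroup.mk y : G ⧸ L) with hd
  have hnpos : 0 < n := orderOf_pos y
  have hdq : d ∣ q := by
    rw [← heq]
    exact orderOf_map_dvd (QuotientGroup.mk' L) x
  have hdn : d ∣ n := orderOf_map_dvd (QuotientGroup.mk' L) y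
  have hd1 : d ≠ 1 := by
    intro h
    have h2 : (QuotientGroup.mk y : G ⧸ L) = 1 := orderOf_eq_one_iff.mp h
    exact hy ((QuotientGroup.eq_one_iff y).mp h2)
  have hydL : y ^ d ∈ L := by
    have h2 : (QuotientGroup.mk (y ^ d) : G ⧸ L) = 1 := by
      rw [QuotientGroup.mk_pow]
      exact pow_orderOf_eq_one _
    exact (QuotientGroup.eq_one_iff _).mp h2
  have hq1 : 1 < q := by
    rcases hord with ⟨hp, _⟩ | h4
    · exact hp.one_lt
    · rw [h4]; norm_num
  -- key arithmetic facts
  have key : q ∣ n ∧ Nat.Coprime q (n / q) := by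
    rcases hord with ⟨hp, hodd⟩ | h4
    · -- odd prime case
      have hdq' : d = q := by
        rcases (Nat.Prime.eq_one_or_self_of_dvd hp d hdq) with h | h
        · exact absurd h hd1
        · exact h
      have hqn : q ∣ n := hdq' ▸ hdn
      refine ⟨hqn, (Nat.Prime.coprime_iff_not_dvd hp).mpr ?_⟩
      intro hdvd
      have hq2 : q * q ∣ n := (Nat.dvd_div_iff_mul_dvd hqn).mp hdvd
      have hq2' : q ^ 2 ∣ n := by rwa [pow_two]
      exact no_odd_sq hG hp hodd (y ^ (n / q ^ 2)) (ord_pow_div y hq2')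
    · -- order 4 case
      have h8 : ¬ (8 ∣ n) := by
        intro hdvd
        exact no_eight hG (y ^ (n / 8)) (ord_pow_div y hdvd)
      have hdq4 : d ∣ 4 := h4 ▸ hdq
      have h4n : (4 : ℕ) ∣ n := by
        rcases (Nat.dvd_prime_pow Nat.prime_two).mp
          (show d ∣ 2 ^ 2 by rwa [show (2:ℕ)^2 = 4 by norm_num]) with ⟨i, hi, hdi⟩
        interval_cases i
        · exact absurd (by simpa using hdi) hd1
        · -- d = 2
          have hd2 : d = 2 := by simpa using hdi
          by_contra hnot4
          have h2n : (2:ℕ) ∣ n := hd2 ▸ hdn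
          have hz : orderOf (y ^ (n / 2)) = 2 := ord_pow_div y h2n
          have hx4 : orderOf x = 4 := by rw [← hq]; exact h4
          have hx2L : x ^ 2 ∈ L := by
            have hqq : orderOf (QuotientGroup.mk x : G ⧸ L) = 2 := by rw [heq]; exact hd2
            have h2 : (QuotientGroup.mk (x ^ 2) : G ⧸ L) = 1 := by
              rw [QuotientGroup.mk_pow]
              rw [show (2:ℕ) = orderOf (QuotientGroup.mk x : G ⧸ L) by rw [heq]; exact hd2.symm]
              exact pow_orderOf_eq_one _
            exact (QuotientGroup.eq_one_iff _).mp h2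
          have hzeq : y ^ (n / 2) = x ^ 2 := invol_eq hG hx4 hz
          have hzL : y ^ (n / 2) ∈ L := hzeq ▸ hx2L
          have hone : (QuotientGroup.mk (y ^ (n / 2)) : G ⧸ L) = 1 :=
            (QuotientGroup.eq_one_iff _).mpr hzL
          have hdn2 : d ∣ n / 2 := by
            rw [hd]
            exact orderOf_dvd_iff_pow_eq_one.mpr
              (by rw [← QuotientGroup.mk_pow]; exact hone)
          rw [hd2] at hdn2
          exact hnot4 ((Nat.dvd_div_iff_mul_dvd h2n).mp hdn2)
        · exact (by simpa using hdi : d = 4) ▸ hdn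
      refine ⟨h4 ▸ h4n, ?_⟩
      have h2m : ¬ (2 ∣ n / 4) := by
        intro hdvd
        exact h8 ((Nat.dvd_div_iff_mul_dvd h4n).mp hdvd)
      have hco2 : Nat.Coprime 2 (n / 4) := (Nat.Prime.coprime_iff_not_dvd Nat.prime_two).mpr h2m
      have : Nat.Coprime 4 (n / 4) := by
        rw [show (4:ℕ) = 2 ^ 2 by norm_num]
        exact Nat.Coprime.pow_left 2 hco2
      rwa [h4]
  obtain ⟨hqn, hco⟩ := key
  -- construct y' = y ^ k
  set m := n / q with hm
  have hnm : n = q * m := (Nat.mul_div_cancel' hqn).symm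
  obtain ⟨k, hk1, hk0⟩ := Nat.chineseRemainder hco 1 0
  have hkq : k % q = 1 := by
    have := hk1
    rwa [Nat.ModEq, Nat.mod_eq_of_lt hq1] at this
  have hkpos : 1 ≤ k := by
    rcases Nat.eq_zero_or_pos k with h | h
    · rw [h] at hkq; simp at hkq
    · exact h
  have hqk1 : q ∣ k - 1 := (Nat.modEq_iff_dvd' hkpos).mp hk1.symm
  have hmk : m ∣ k := Nat.modEq_zero_iff_dvd.mp hk0
  have hcoqk : Nat.Coprime q k := by
    show Nat.gcd q k = 1
    rw [Nat.gcd_rec, hkq, Nat.gcd_one_left]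
  have hgcd : Nat.gcd n k = m := by
    rw [hnm, Nat.Coprime.gcd_mul_left_cancel m hcoqk, Nat.gcd_eq_left hmk]
  have hmpos : 0 < m := by
    rcases Nat.eq_zero_or_pos m with h | h
    · rw [h, Nat.mul_zero] at hnm; omega
    · exact h
  have hord' : orderOf (y ^ k) = q := by
    rw [orderOf_pow, ← hn, hgcd, hnm, Nat.mul_div_cancel _ hmpos]
  have hkm1L : y ^ (k - 1) ∈ L := by
    obtain ⟨t, ht⟩ := dvd_trans hdq hqk1
    rw [ht, pow_mul]
    exact Subgroup.pow_mem L hydL t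
  refine ⟨y ^ k, ?_, hord'⟩
  refine ⟨y ^ (k - 1), hkm1L, y, rfl, ?_⟩
  show y ^ (k - 1) * y = y ^ k
  rw [← pow_succ]
  congr 1
  omega


end Paper
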